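/- arXiv:1305.4339 — 6 statements merged into one kernel-verified Lean document; each statement's English description precedes it below -/
import Mathlib

section
/- Let Y ⊆ {0,1}^n be a predictive space of the form Y = ⋂_{k=1}^K C_k where C_k = {y ∈ {0,1}^n : ∑_{i ∈ I_k} y_i ≤ 1} for index sets I_k ⊆ {1,…,n}. Let Θ be a finite parameter space with probability distribution p on Θ, and let F_i : Θ × {0,1} → ℝ≥0 be pointwise gain components satisfying F_i(θ,1) − F_i(θ,0) + F_j(θ,1) − F_j(θ,0) ≤ 0 for every θ ∈ Θ and every i ≠ j both in some I_k. Define the consensus estimator ŷ^(c) componentwise by ŷ^(c)_i = argmax_{b∈{0,1}} ∑_θ F_i(θ,b) p(θ). Then ŷ^(c) ∈ Y. -/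
/-- consensus estimator lies in the predictive space
`Y = ⋂_k {y : ∑_{i ∈ I_k} y_i ≤ 1}` under the pairwise gain condition. -/
theorem stmt0 {n K : ℕ} (I : Fin K → Finset (Fin n))
    {Θ : Type*} [Fintype Θ] (p : Θ → ℝ)
    (hp0 : ∀ θ, 0 ≤ p θ) (hp1 : ∑ θ, p θ = 1)
    (F : Fin n → Θ → Bool → ℝ) (hF0 : ∀ i θ b, 0 ≤ F i θ b)
    (hpair : ∀ (θ : Θ) (k : Fin K), ∀ i ∈ I k, ∀ j ∈ I k, i ≠ j →
      F i θ true - F i θ false + F j θ true - F j θ false ≤ 0)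
    (yc : Fin n → Bool)
    (hyc : ∀ i, yc i = decide ((∑ θ, F i θ false * p θ) < ∑ θ, F i θ true * p θ)) :
    ∀ k : Fin K, (∑ i ∈ I k, if yc i then 1 else 0 : ℕ) ≤ 1 := by
  intro k
  have key : ∀ i, yc i = true →
      0 < ∑ θ, (F i θ true - F i θ false) * p θ := by
    intro i hi
    have h := (hyc i) ▸ hi
    have hlt : (∑ θ, F i θ false * p θ) < ∑ θ, F i θ true * p θ :=
      of_decide_eq_true h
    have : ∑ θ, (F i θ true - F i θ false) * p θ
        = (∑ θ, F i θ true * p θ) - ∑ θ, F i θ false * p θ := by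
      rw [← Finset.sum_sub_distrib]
      congr 1; ext θ; ring
    rw [this]; linarith
  -- sum of indicator equals card of filter
  have hsum : (∑ i ∈ I k, if yc i then 1 else 0 : ℕ)
      = ((I k).filter (fun i => yc i = true)).card := by
    rw [Finset.card_filter]
  rw [hsum]
  rw [Finset.card_le_one]
  intro i hi j hj
  simp only [Finset.mem_filter] at hi hj
  by_contra hij
  have h1 := key i hi.2
  have h2 := key j hj.2
  have hsum2 : 0 < ∑ θ, ((F i θ true - F i θ false) + (F j θ true - F j θ false)) * p θ := by
    have : ∑ θ, ((F i θ true - F i θ false) + (F j θ true - F j θ false)) * p θ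
        = (∑ θ, (F i θ true - F i θ false) * p θ) + ∑ θ, (F j θ true - F j θ false) * p θ := by
      rw [← Finset.sum_add_distrib]
      apply Finset.sum_congr rfl; intro θ _; ring
    rw [this]; linarith
  have hle : (∑ θ, ((F i θ true - F i θ false) + (F j θ true - F j θ false)) * p θ) ≤ 0 := by
    apply Finset.sum_nonpos
    intro θ _
    apply mul_nonpos_of_nonpos_of_nonneg _ (hp0 θ)
    have := hpair θ k i hi.1 j hj.1 hij
    linarith
  linarith
end

section
/- Under the hypotheses of the previous setting (Y = ⋂ C_k, pointwise gain with the pairwise condition F_i(θ,1)−F_i(θ,0)+F_j(θ,1)−F_j(θ,0) ≤ 0 for i,j in a common I_k), the consensus estimator ŷ^(c) maximizes the expected gain E[G(θ,y)] over all y ∈ Y; that is, ŷ^(c) is a maximum expected gain (MEG) estimator. -/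
/-- the consensus estimator maximizes the expected pointwise gain
over the predictive space `Y = ⋂_k {y : ∑_{i ∈ I_k} y_i ≤ 1}`. -/
theorem stmt1 {n K : ℕ} (I : Fin K → Finset (Fin n))
    {Θ : Type*} [Fintype Θ] (p : Θ → ℝ)
    (hp0 : ∀ θ, 0 ≤ p θ) (hp1 : ∑ θ, p θ = 1)
    (F : Fin n → Θ → Bool → ℝ) (hF0 : ∀ i θ b, 0 ≤ F i θ b)
    (hpair : ∀ (θ : Θ) (k : Fin K), ∀ i ∈ I k, ∀ j ∈ I k, i ≠ j →
      F i θ true - F i θ false + F j θ true - F j θ false ≤ 0)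
    (yc : Fin n → Bool)
    (hyc : ∀ i, yc i = decide ((∑ θ, F i θ false * p θ) < ∑ θ, F i θ true * p θ)) :
    (∀ k : Fin K, (∑ i ∈ I k, if yc i then 1 else 0 : ℕ) ≤ 1) ∧
    (∀ y : Fin n → Bool, (∀ k : Fin K, (∑ i ∈ I k, if y i then 1 else 0 : ℕ) ≤ 1) →
      (∑ θ, (∑ i, F i θ (y i)) * p θ) ≤ ∑ θ, (∑ i, F i θ (yc i)) * p θ) := by
  constructor
  · intro k
    have hsum : (∑ i ∈ I k, if yc i then 1 else 0 : ℕ)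
        = ((I k).filter (fun i => yc i = true)).card := by
      rw [Finset.card_filter]
    rw [hsum]
    apply Finset.card_le_one.mpr
    intro i hi j hj
    simp only [Finset.mem_filter] at hi hj
    by_contra hij
    have hi' := hi.2; have hj' := hj.2
    rw [hyc i, decide_eq_true_iff] at hi'
    rw [hyc j, decide_eq_true_iff] at hj'
    have h1 : (∑ θ, (F i θ true - F i θ false + F j θ true - F j θ false) * p θ) ≤ 0 := by
      apply Finset.sum_nonpos
      intro θ _
      exact mul_nonpos_of_nonpos_of_nonneg
        (hpair θ k i hi.1 j hj.1 hij) (hp0 θ)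
    have h2 : (∑ θ, (F i θ true - F i θ false + F j θ true - F j θ false) * p θ)
        = (∑ θ, F i θ true * p θ) - (∑ θ, F i θ false * p θ)
          + (∑ θ, F j θ true * p θ) - (∑ θ, F j θ false * p θ) := by
      rw [← Finset.sum_sub_distrib, ← Finset.sum_add_distrib, ← Finset.sum_sub_distrib]
      apply Finset.sum_congr rfl
      intro θ _
      ring
    rw [h2] at h1
    linarith
  · intro y _
    have hswap : ∀ z : Fin n → Bool,
        (∑ θ, (∑ i, F i θ (z i)) * p θ) = ∑ i, ∑ θ, F i θ (z i) * p θ := by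
      intro z
      rw [Finset.sum_comm]
      apply Finset.sum_congr rfl
      intro θ _
      rw [Finset.sum_mul]
    rw [hswap, hswap]
    apply Finset.sum_le_sum
    intro i _
    have h := hyc i
    by_cases hc : (∑ θ, F i θ false * p θ) < ∑ θ, F i θ true * p θ
    · simp only [hc, decide_eq_true_eq, decide_true] at h
      rw [h]
      cases y i
      · exact le_of_lt hc
      · exact le_refl _
    · simp [hc] at h
      rw [h]
      push_neg at hc
      cases y i
      · exact le_refl _
      · exact hc
end

section
/- Let Y = ⋂_{k=1}^K {y ∈ {0,1}^n : ∑_{i∈I_k} y_i ≤ 1}, p a distribution on Y, γ ∈ [0,1], and p_i the marginal probability of coordinate i. Then the vector y* with y*_i = 1 if p_i > 1/(γ+1) and y*_i = 0 otherwise lies in Y and maximizes the expected γ-centroid gain ∑_i [(γ+1)p_i−1]I(y_i=1) over Y. -/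
/-- for γ ∈ [0,1] on a space of 'at most one 1 per constraint set'
type, the thresholded vector y* (y*_i = 1 iff p_i > 1/(γ+1)) is feasible and
maximizes the expected γ-centroid gain. -/
theorem stmt6 {n K : ℕ} (I : Fin K → Finset (Fin n))
    (Y : Finset (Fin n → Bool))
    (hY : ∀ y : Fin n → Bool, y ∈ Y ↔ ∀ k, (∑ i ∈ I k, if y i then 1 else 0 : ℕ) ≤ 1)
    (p : (Fin n → Bool) → ℝ) (hp0 : ∀ θ, 0 ≤ p θ) (hp1 : ∑ θ ∈ Y, p θ = 1)
    (γ : ℝ) (hγ0 : 0 ≤ γ) (hγ1 : γ ≤ 1)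
    (pm : Fin n → ℝ) (hpm : ∀ i, pm i = ∑ θ ∈ Y, (if θ i then (1:ℝ) else 0) * p θ)
    (ystar : Fin n → Bool) (hystar : ∀ i, ystar i = decide (1/(γ+1) < pm i)) :
    ystar ∈ Y ∧
    ∀ y ∈ Y, (∑ i, ((γ + 1) * pm i - 1) * (if y i then (1:ℝ) else 0))
        ≤ ∑ i, ((γ + 1) * pm i - 1) * (if ystar i then (1:ℝ) else 0) := by
  have hγpos : (0:ℝ) < γ + 1 := by linarith
  have hhalf : (1:ℝ)/2 ≤ 1/(γ+1) := by
    rw [div_le_div_iff₀ (by norm_num) hγpos]; linarith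
  constructor
  · rw [hY]
    intro k
    by_contra h
    push_neg at h
    have hcard : 1 < ((I k).filter (fun i => ystar i = true)).card := by
      have heq : ∑ i ∈ I k, (if ystar i then 1 else 0 : ℕ)
          = ((I k).filter (fun i => ystar i = true)).card := by
        rw [Finset.card_filter]
      omega
    obtain ⟨i, hi, j, hj, hij⟩ := Finset.one_lt_card.mp hcard
    simp only [Finset.mem_filter] at hi hj
    have hpi : 1/(γ+1) < pm i := by
      have := hystar i; rw [hi.2] at this; exact of_decide_eq_true this.symm
    have hpj : 1/(γ+1) < pm j := by
      have := hystar j; rw [hj.2] at this; exact of_decide_eq_true this.symm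
    have hsum : pm i + pm j ≤ 1 := by
      have key : pm i + pm j ≤ ∑ θ ∈ Y, p θ := by
        rw [hpm i, hpm j, ← Finset.sum_add_distrib]
        refine Finset.sum_le_sum fun θ hθ => ?_
        have hθk := (hY θ).mp hθ k
        have hno : ¬(θ i = true ∧ θ j = true) := by
          rintro ⟨h1, h2⟩
          have hsub : ({i, j} : Finset (Fin n)) ⊆ I k := by
            intro x hx
            simp only [Finset.mem_insert, Finset.mem_singleton] at hx
            rcases hx with rfl | rfl
            · exact hi.1
            · exact hj.1
          have h2le : (2:ℕ) ≤ ∑ l ∈ I k, (if θ l then 1 else 0 : ℕ) := by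
            calc (2:ℕ) = ∑ l ∈ ({i,j} : Finset (Fin n)), (if θ l then 1 else 0 : ℕ) := by
                  simp [Finset.sum_pair hij, h1, h2]
              _ ≤ _ := Finset.sum_le_sum_of_subset hsub
          omega
        by_cases h1 : θ i = true <;> by_cases h2 : θ j = true
        · exact absurd ⟨h1, h2⟩ hno
        · simp [h1, h2]
        · simp [h1, h2]
        · simp [h1, h2, hp0 θ]
      rw [hp1] at key; exact key
    linarith
  · intro y _
    apply Finset.sum_le_sum
    intro i _
    have hd := hystar i
    by_cases hc : 1/(γ+1) < pm i
    · have hy : ystar i = true := by rw [hd]; exact decide_eq_true hc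
      have hcoef : 0 ≤ (γ+1) * pm i - 1 := by
        rw [div_lt_iff₀ hγpos] at hc; nlinarith
      by_cases hyi : y i <;> simp [hyi, hy] <;> linarith
    · have hy : ystar i = false := by rw [hd]; exact decide_eq_false hc
      push_neg at hc
      have hcoef : (γ+1) * pm i - 1 ≤ 0 := by
        rw [le_div_iff₀ hγpos] at hc; nlinarith
      by_cases hyi : y i <;> simp [hyi, hy] <;> linarith
end

section
/- For γ > 1, the conclusion of the consensus-estimator corollary can fail: there exist n, a predictive space Y = ⋂_k C_k of 'at most one 1' type, a probability distribution p on Y, and γ > 1 such that the thresholded vector y* (y*_i = 1 iff p_i > 1/(γ+1)) is not a member of Y. -/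
lemma sum4 (f : (Fin 2 → Bool) → ℝ) :
    ∑ y, f y = f ![false,false] + f ![false,true] + f ![true,false] + f ![true,true] := by
  have hu : (Finset.univ : Finset (Fin 2 → Bool)) =
      {![false,false], ![false,true], ![true,false], ![true,true]} := by decide
  rw [hu, Finset.sum_insert (by decide), Finset.sum_insert (by decide),
    Finset.sum_insert (by decide), Finset.sum_singleton]
  ring

/-- for γ > 1 the thresholded vector can fail to lie in the
predictive space. -/
theorem stmt8 : ∃ (n K : ℕ) (I : Fin K → Finset (Fin n))
    (p : (Fin n → Bool) → ℝ) (γ : ℝ),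
    1 < γ ∧ (∀ y, 0 ≤ p y) ∧ (∑ y, p y) = 1 ∧
    (∀ y : Fin n → Bool, p y ≠ 0 → ∀ k, (∑ i ∈ I k, if y i then 1 else 0 : ℕ) ≤ 1) ∧
    ¬ (∀ k, (∑ i ∈ I k,
        if decide (1/(γ+1) < ∑ y : Fin n → Bool, (if y i then (1:ℝ) else 0) * p y)
        then 1 else 0 : ℕ) ≤ 1) := by
  refine ⟨2, 1, fun _ => Finset.univ,
    fun y => if xor (y 0) (y 1) then (1/2 : ℝ) else 0, 2, by norm_num, ?_, ?_, ?_, ?_⟩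
  · intro y; dsimp only; split <;> norm_num
  · rw [sum4]; norm_num
  · intro y hy k
    dsimp only at hy
    by_cases h : xor (y 0) (y 1)
    · rcases Bool.dichotomy (y 0) with h0 | h0 <;> rcases Bool.dichotomy (y 1) with h1 | h1 <;>
        · rw [show (Finset.univ : Finset (Fin 2)) = {0, 1} by rfl,
            Finset.sum_insert (by decide), Finset.sum_singleton, h0, h1]
          simp_all
    · simp [h] at hy
  · intro h
    have h0 := h 0
    have hm : ∀ i : Fin 2, (∑ y : Fin 2 → Bool, (if y i then (1:ℝ) else 0) *
        (if xor (y 0) (y 1) then (1/2 : ℝ) else 0)) = 1/2 := by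
      intro i
      rw [sum4]
      fin_cases i <;> norm_num
    rw [Fin.sum_univ_two, hm 0, hm 1] at h0
    norm_num at h0
end

section
/- Combining the representative equivalence with the γ-centroid consensus corollary: if Y = ⋂_k {y : ∑_{i∈I_k} y_i ≤ 1}, γ ∈ [0,1], and p̄_i = (1/K)∑_k p^(k)_i are the averaged marginals, then the vector y* with y*_i = 1 iff p̄_i > 1/(γ+1) belongs to Y and maximizes the expected homogeneous γ-centroid gain ∑_{k=1}^K ∑_i [γI(θ^k_i=1)I(y_i=1)+I(θ^k_i=0)I(y_i=0)] over y ∈ Y, where expectation is under the product distribution ∏_k p^(k). -/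
set_option maxHeartbeats 2000000

lemma marg {n K : ℕ} (p : Fin K → (Fin n → Bool) → ℝ) (hp : ∀ j, ∑ t, p j t = 1)
    (k : Fin K) (g : (Fin n → Bool) → ℝ) :
    ∑ θ : Fin K → (Fin n → Bool), g (θ k) * ∏ j, p j (θ j) = ∑ t, g t * p k t := by
  have key : ∀ θ : Fin K → (Fin n → Bool),
      g (θ k) * ∏ j, p j (θ j)
        = ∏ j, (if j = k then g (θ j) * p j (θ j) else p j (θ j)) := by
    intro θ
    rw [← Finset.mul_prod_erase Finset.univ (fun j => p j (θ j)) (Finset.mem_univ k),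
        ← Finset.mul_prod_erase Finset.univ
          (fun j => if j = k then g (θ j) * p j (θ j) else p j (θ j)) (Finset.mem_univ k)]
    have : ∏ j ∈ Finset.univ.erase k,
        (if j = k then g (θ j) * p j (θ j) else p j (θ j))
        = ∏ j ∈ Finset.univ.erase k, p j (θ j) :=
      Finset.prod_congr rfl fun j hj => if_neg (Finset.ne_of_mem_erase hj)
    rw [this, if_pos rfl]
    ring
  calc ∑ θ : Fin K → (Fin n → Bool), g (θ k) * ∏ j, p j (θ j)
      = ∑ θ ∈ Fintype.piFinset (fun _ : Fin K => (Finset.univ : Finset (Fin n → Bool))),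
          ∏ j, (if j = k then g (θ j) * p j (θ j) else p j (θ j)) := by
        rw [Fintype.piFinset_univ]
        exact Finset.sum_congr rfl fun θ _ => key θ
    _ = ∏ j, ∑ t, (if j = k then g t * p j t else p j t) :=
        (Finset.prod_univ_sum (fun _ : Fin K => (Finset.univ : Finset (Fin n → Bool)))
          (fun j t => if j = k then g t * p j t else p j t)).symm
    _ = ∑ t, g t * p k t := by
        have h1 : ∀ j, (∑ t, if j = k then g t * p j t else p j t)
            = if j = k then ∑ t, g t * p k t else 1 := by
          intro j
          by_cases h : j = k <;> simp [h, hp j]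
        simp_rw [h1]
        simp

/-- thresholding the averaged marginals at 1/(γ+1) (γ ∈ [0,1])
gives a feasible maximizer of the expected homogeneous γ-centroid gain under
the product distribution. -/
theorem stmt11 {n L K : ℕ} (hK : 0 < K) (I : Fin L → Finset (Fin n))
    (Y : Finset (Fin n → Bool))
    (hY : ∀ y : Fin n → Bool, y ∈ Y ↔ ∀ l, (∑ i ∈ I l, if y i then 1 else 0 : ℕ) ≤ 1)
    (γ : ℝ) (hγ0 : 0 ≤ γ) (hγ1 : γ ≤ 1)
    (p : Fin K → (Fin n → Bool) → ℝ)
    (hp0 : ∀ k t, 0 ≤ p k t) (hp1 : ∀ k, ∑ t ∈ Y, p k t = 1)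
    (hsupp : ∀ k t, t ∉ Y → p k t = 0)
    (pbar : Fin n → ℝ)
    (hpbar : ∀ i, pbar i = (1/(K:ℝ)) * ∑ k, ∑ t ∈ Y, (if t i then (1:ℝ) else 0) * p k t)
    (ystar : Fin n → Bool) (hystar : ∀ i, ystar i = decide (1/(γ+1) < pbar i)) :
    ystar ∈ Y ∧
    ∀ y ∈ Y,
      (∑ θ : Fin K → (Fin n → Bool),
        (∑ k, ∑ i, (γ * (if (θ k) i ∧ y i then (1:ℝ) else 0)
            + (if ¬ (θ k) i ∧ ¬ y i then (1:ℝ) else 0))) * ∏ k, p k (θ k))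
      ≤ ∑ θ : Fin K → (Fin n → Bool),
        (∑ k, ∑ i, (γ * (if (θ k) i ∧ ystar i then (1:ℝ) else 0)
            + (if ¬ (θ k) i ∧ ¬ ystar i then (1:ℝ) else 0))) * ∏ k, p k (θ k) := by
  have hKR : (0:ℝ) < K := by exact_mod_cast hK
  have hγ1' : (0:ℝ) < γ + 1 := by linarith
  -- extend Y-sums to full sums
  have hext : ∀ (k : Fin K) (f : (Fin n → Bool) → ℝ),
      ∑ t ∈ Y, f t * p k t = ∑ t, f t * p k t := by
    intro k f
    exact Finset.sum_subset (Finset.subset_univ Y)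
      (fun t _ ht => by rw [hsupp k t ht, mul_zero])
  have hp1' : ∀ k, ∑ t, p k t = 1 := by
    intro k
    rw [← hp1 k]
    exact (Finset.sum_subset (Finset.subset_univ Y) (fun t _ ht => hsupp k t ht)).symm
  set q : Fin K → Fin n → ℝ := fun k i => ∑ t, (if t i then (1:ℝ) else 0) * p k t with hq
  set Q : Fin n → ℝ := fun i => ∑ k, q k i with hQdef
  have hQ : ∀ i, Q i = K * pbar i := by
    intro i
    rw [hpbar]
    have : ∑ k, ∑ t ∈ Y, (if t i then (1:ℝ) else 0) * p k t = Q i := by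
      refine Finset.sum_congr rfl fun k _ => ?_
      exact hext k _
    rw [this]
    field_simp
  have hpbar_nonneg : ∀ i, 0 ≤ pbar i := by
    intro i
    rw [hpbar]
    apply mul_nonneg (by positivity)
    apply Finset.sum_nonneg; intro k _
    apply Finset.sum_nonneg; intro t _
    apply mul_nonneg _ (hp0 k t)
    split <;> norm_num
  have hsum_le : ∀ l, ∑ i ∈ I l, pbar i ≤ 1 := by
    intro l
    have h1 : ∑ i ∈ I l, pbar i
        = (1/(K:ℝ)) * ∑ k, ∑ t ∈ Y, (∑ i ∈ I l, (if t i then (1:ℝ) else 0)) * p k t := by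
      simp_rw [hpbar, ← Finset.mul_sum]
      congr 1
      rw [Finset.sum_comm]
      refine Finset.sum_congr rfl fun k _ => ?_
      rw [Finset.sum_comm]
      refine Finset.sum_congr rfl fun t _ => ?_
      rw [Finset.sum_mul]
    rw [h1]
    have h2 : ∑ k : Fin K, ∑ t ∈ Y, (∑ i ∈ I l, (if t i then (1:ℝ) else 0)) * p k t
        ≤ ∑ k : Fin K, ∑ t ∈ Y, p k t := by
      refine Finset.sum_le_sum fun k _ => Finset.sum_le_sum fun t ht => ?_
      have htY : (∑ i ∈ I l, if t i then 1 else 0 : ℕ) ≤ 1 := (hY t).1 ht l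
      have : (∑ i ∈ I l, (if t i then (1:ℝ) else 0)) ≤ 1 := by
        have := (Nat.cast_le (α := ℝ)).2 htY
        push_cast at this
        simpa using this
      nlinarith [hp0 k t]
    calc (1/(K:ℝ)) * ∑ k, ∑ t ∈ Y, (∑ i ∈ I l, (if t i then (1:ℝ) else 0)) * p k t
        ≤ (1/(K:ℝ)) * ∑ k : Fin K, ∑ t ∈ Y, p k t := by
          apply mul_le_mul_of_nonneg_left h2 (by positivity)
      _ = 1 := by simp [hp1]; exact inv_mul_cancel₀ hKR.ne'
  -- feasibility
  have hmem : ystar ∈ Y := by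
    rw [hY]
    intro l
    have hcard : ((I l).filter (fun i => ystar i = true)).card ≤ 1 := by
      rw [Finset.card_le_one]
      intro a ha b hb
      simp only [Finset.mem_filter] at ha hb
      by_contra hab
      have hpa : 1/(γ+1) < pbar a := of_decide_eq_true ((hystar a).symm.trans ha.2)
      have hpb : 1/(γ+1) < pbar b := of_decide_eq_true ((hystar b).symm.trans hb.2)
      have hhalf : (1:ℝ)/2 ≤ 1/(γ+1) := by
        rw [div_le_div_iff₀ (by norm_num) hγ1']
        linarith
      have hsub : ({a, b} : Finset (Fin n)) ⊆ I l := by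
        intro x hx
        simp only [Finset.mem_insert, Finset.mem_singleton] at hx
        rcases hx with rfl | rfl
        · exact ha.1
        · exact hb.1
      have : pbar a + pbar b ≤ ∑ i ∈ I l, pbar i := by
        rw [← Finset.sum_pair hab]
        exact Finset.sum_le_sum_of_subset_of_nonneg hsub fun i _ _ => hpbar_nonneg i
      have := hsum_le l
      linarith
    calc (∑ i ∈ I l, if ystar i then 1 else 0 : ℕ)
        = ((I l).filter (fun i => ystar i = true)).card := by
          rw [Finset.card_filter]
      _ ≤ 1 := hcard
  refine ⟨hmem, fun y _ => ?_⟩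
  -- compute expected value
  have hF : ∀ y : Fin n → Bool,
      (∑ θ : Fin K → (Fin n → Bool),
        (∑ k, ∑ i, (γ * (if (θ k) i ∧ y i then (1:ℝ) else 0)
            + (if ¬ (θ k) i ∧ ¬ y i then (1:ℝ) else 0))) * ∏ k, p k (θ k))
      = ∑ i, (if y i then γ * Q i else (K:ℝ) - Q i) := by
    intro y
    have step1 : (∑ θ : Fin K → (Fin n → Bool),
        (∑ k, ∑ i, (γ * (if (θ k) i ∧ y i then (1:ℝ) else 0)
            + (if ¬ (θ k) i ∧ ¬ y i then (1:ℝ) else 0))) * ∏ k, p k (θ k))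
        = ∑ k, ∑ i, ∑ θ : Fin K → (Fin n → Bool),
            (γ * (if (θ k) i ∧ y i then (1:ℝ) else 0)
              + (if ¬ (θ k) i ∧ ¬ y i then (1:ℝ) else 0)) * ∏ j, p j (θ j) := by
      simp_rw [Finset.sum_mul]
      rw [Finset.sum_comm]
      exact Finset.sum_congr rfl fun k _ => by rw [Finset.sum_comm]
    rw [step1]
    have step2 : ∀ (k : Fin K) (i : Fin n),
        (∑ θ : Fin K → (Fin n → Bool),
            (γ * (if (θ k) i ∧ y i then (1:ℝ) else 0)
              + (if ¬ (θ k) i ∧ ¬ y i then (1:ℝ) else 0)) * ∏ j, p j (θ j))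
        = if y i then γ * q k i else 1 - q k i := by
      intro k i
      rw [marg p hp1' k (fun t => γ * (if t i ∧ y i then (1:ℝ) else 0)
            + (if ¬ t i ∧ ¬ y i then (1:ℝ) else 0))]
      by_cases hy : y i = true
      · rw [if_pos hy]
        have hc : ∀ t : Fin n → Bool, (γ * (if t i = true ∧ y i = true then (1:ℝ) else 0)
            + (if ¬ t i = true ∧ ¬ y i = true then (1:ℝ) else 0)) * p k t
            = γ * ((if t i = true then (1:ℝ) else 0) * p k t) := by
          intro t; by_cases h : t i = true <;> simp [h, hy]
        simp_rw [hc, ← Finset.mul_sum]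
        rfl
      · rw [if_neg hy]
        have hc : ∀ t : Fin n → Bool, (γ * (if t i = true ∧ y i = true then (1:ℝ) else 0)
            + (if ¬ t i = true ∧ ¬ y i = true then (1:ℝ) else 0)) * p k t
            = p k t - (if t i = true then (1:ℝ) else 0) * p k t := by
          intro t; by_cases h : t i = true <;> simp [h, hy]
        simp_rw [hc, Finset.sum_sub_distrib, hp1' k]
        rfl
    simp_rw [step2]
    rw [Finset.sum_comm]
    refine Finset.sum_congr rfl fun i _ => ?_
    by_cases hy : y i = true
    · simp_rw [if_pos hy]; rw [hQdef, Finset.mul_sum]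
    · simp_rw [if_neg hy]; rw [hQdef, Finset.sum_sub_distrib]
      simp [Finset.card_univ]
  rw [hF y, hF ystar]
  refine Finset.sum_le_sum fun i _ => ?_
  rw [hQ i]
  by_cases hy : y i = true <;> by_cases hs : ystar i = true
  · rw [if_pos hy, if_pos hs]
  · rw [if_pos hy, if_neg hs]
    have h1 : ¬ (1/(γ+1) < pbar i) := fun h =>
      hs ((hystar i).trans (decide_eq_true h))
    push_neg at h1
    have h2 : (γ+1) * pbar i ≤ 1 := by
      calc (γ+1) * pbar i ≤ (γ+1) * (1/(γ+1)) := by nlinarith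
        _ = 1 := by field_simp
    nlinarith [mul_le_mul_of_nonneg_left h2 hKR.le]
  · rw [if_neg hy, if_pos hs]
    have h1 : 1/(γ+1) < pbar i := of_decide_eq_true ((hystar i).symm.trans hs)
    have h2 : 1 ≤ (γ+1) * pbar i := by
      calc (1:ℝ) = (γ+1) * (1/(γ+1)) := by field_simp
        _ ≤ (γ+1) * pbar i := by nlinarith
    nlinarith [mul_le_mul_of_nonneg_left h2 hKR.le]
  · rw [if_neg hy, if_neg hs]
end

section
/- Gain function of the AMA estimator vs γ-centroid: for pairwise-alignment binary matrices θ, y ∈ {0,1}^{m×m'} in the alignment space A(m,m') and gap factor G_f = 1/γ > 0, G^AMA(θ,y) := 2∑_{i,k}I(θ_{ik}=1)I(y_{ik}=1) + G_f[∑_i ∏_k I(θ_{ik}=0)I(y_{ik}=0) + ∑_k ∏_i I(θ_{ik}=0)I(y_{ik}=0)] satisfies G^AMA(θ,y) = (2/γ)G^centroid(θ,y) + (1/γ)A(θ,y) + C(θ), where G^centroid(θ,y) = ∑_{i,k}[γI(θ_{ik}=1)I(y_{ik}=1)+I(θ_{ik}=0)I(y_{ik}=0)], A(θ,y) = ∑_i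 ∑_{k1≠k2} I(θ_{ik1}=1)I(y_{ik2}=1) + ∑_k ∑_{i1≠i2} I(θ_{i1 k}=1)I(y_{i2 k}=1) ≥ 0, and C(θ) does not depend on y. -/
lemma ind_and' (a b : Bool) :
    (if a ∧ b then (1:ℝ) else 0) = (if a then (1:ℝ) else 0) * (if b then (1:ℝ) else 0) := by
  cases a <;> cases b <;> simp

lemma ind_notnot' (a b : Bool) :
    (if ¬ a ∧ ¬ b then (1:ℝ) else 0)
      = (1 - (if a then (1:ℝ) else 0)) * (1 - (if b then (1:ℝ) else 0)) := by
  cases a <;> cases b <;> simp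

lemma prod_one_sub {n : ℕ} (a : Fin n → Bool)
    (ha : (∑ k, if a k then 1 else 0 : ℕ) ≤ 1) :
    (∏ k, (1 - (if a k then (1:ℝ) else 0))) = 1 - ∑ k, (if a k then (1:ℝ) else 0) := by
  rcases Nat.le_one_iff_eq_zero_or_eq_one.mp ha with h | h
  · have hall : ∀ k, a k = false := by
      intro k
      by_contra hk
      have hk' : a k = true := by simpa using hk
      have := Finset.sum_eq_zero_iff.mp h k (Finset.mem_univ k)
      simp [hk'] at this
    simp [hall]
  · obtain ⟨k, hk⟩ : ∃ k, a k = true := by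
      by_contra h'
      push_neg at h'
      have hall : ∀ k, a k = false := fun k => by simpa using h' k
      simp [hall] at h
    have hsum : (∑ k, (if a k then (1:ℝ) else 0)) = 1 := by
      have : ((∑ k, if a k then 1 else 0 : ℕ) : ℝ) = ∑ k, (if a k then (1:ℝ) else 0) := by
        push_cast
        rfl
      rw [← this, h]
      norm_num
    rw [hsum]
    refine Finset.prod_eq_zero (Finset.mem_univ k) ?_ |>.trans (by ring)
    simp [hk]

lemma prod_notnot {n : ℕ} (a b : Fin n → Bool)
    (ha : (∑ k, if a k then 1 else 0 : ℕ) ≤ 1)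
    (hb : (∑ k, if b k then 1 else 0 : ℕ) ≤ 1) :
    (∏ k, if ¬ a k ∧ ¬ b k then (1:ℝ) else 0)
      = (1 - ∑ k, (if a k then (1:ℝ) else 0)) * (1 - ∑ k, (if b k then (1:ℝ) else 0)) := by
  simp only [ind_notnot']
  rw [Finset.prod_mul_distrib, prod_one_sub a ha, prod_one_sub b hb]

lemma sum_mul_sum_split {n : ℕ} (a b : Fin n → Bool) :
    (∑ k, (if a k then (1:ℝ) else 0)) * (∑ k, (if b k then (1:ℝ) else 0))
      = (∑ k, if a k ∧ b k then (1:ℝ) else 0)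
        + ∑ k1, ∑ k2, (if k1 ≠ k2 ∧ a k1 ∧ b k2 then (1:ℝ) else 0) := by
  rw [Finset.sum_mul_sum]
  have key : ∀ k1 k2 : Fin n,
      (if a k1 then (1:ℝ) else 0) * (if b k2 then (1:ℝ) else 0)
        = (if k1 = k2 ∧ a k1 ∧ b k2 then (1:ℝ) else 0)
          + (if k1 ≠ k2 ∧ a k1 ∧ b k2 then (1:ℝ) else 0) := by
    intro k1 k2
    by_cases h : k1 = k2 <;> cases ha : a k1 <;> cases hb : b k2 <;> simp [h, ha, hb]
  simp only [key, Finset.sum_add_distrib]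
  congr 1
  refine Finset.sum_congr rfl fun k1 _ => ?_
  rw [Finset.sum_eq_single k1]
  · simp
  · intro k2 _ hne
    simp [Ne.symm hne]
  · simp

/-- decomposition of the AMA gain with gap factor G_f = 1/γ into
the γ-centroid gain, a nonnegative bias term A, and a term depending only on θ. -/
theorem stmt17 {m m' : ℕ} (γ : ℝ) (hγ : 0 < γ)
    (inA : (Fin m → Fin m' → Bool) → Prop)
    (hinA : ∀ θ, inA θ ↔
      ((∀ i, (∑ k, if θ i k then 1 else 0 : ℕ) ≤ 1) ∧
       (∀ k, (∑ i, if θ i k then 1 else 0 : ℕ) ≤ 1) ∧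
       (∀ i j k l, i < j → l < k → ¬(θ i k = true ∧ θ j l = true))))
    (GAMA Gc Aterm : (Fin m → Fin m' → Bool) → (Fin m → Fin m' → Bool) → ℝ)
    (hGAMA : ∀ θ y, GAMA θ y =
      2 * (∑ i, ∑ k, if θ i k ∧ y i k then (1:ℝ) else 0) +
      (1/γ) * ((∑ i, ∏ k, if ¬ θ i k ∧ ¬ y i k then (1:ℝ) else 0) +
               (∑ k, ∏ i, if ¬ θ i k ∧ ¬ y i k then (1:ℝ) else 0)))
    (hGc : ∀ θ y, Gc θ y = ∑ i, ∑ k,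
      (γ * (if θ i k ∧ y i k then (1:ℝ) else 0) + (if ¬ θ i k ∧ ¬ y i k then (1:ℝ) else 0)))
    (hA : ∀ θ y, Aterm θ y =
      (∑ i, ∑ k1, ∑ k2, if k1 ≠ k2 ∧ θ i k1 ∧ y i k2 then (1:ℝ) else 0) +
      (∑ k, ∑ i1, ∑ i2, if i1 ≠ i2 ∧ θ i1 k ∧ y i2 k then (1:ℝ) else 0)) :
    (∀ θ y, 0 ≤ Aterm θ y) ∧
    ∃ C : (Fin m → Fin m' → Bool) → ℝ, ∀ θ y, inA θ → inA y →
      GAMA θ y = (2/γ) * Gc θ y + (1/γ) * Aterm θ y + C θ := by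
  constructor
  · intro θ y
    rw [hA θ y]
    have h1 : (0:ℝ) ≤ ∑ i, ∑ k1, ∑ k2, if k1 ≠ k2 ∧ θ i k1 ∧ y i k2 then (1:ℝ) else 0 := by
      apply Finset.sum_nonneg; intro i _
      apply Finset.sum_nonneg; intro k1 _
      apply Finset.sum_nonneg; intro k2 _
      positivity
    have h2 : (0:ℝ) ≤ ∑ k, ∑ i1, ∑ i2, if i1 ≠ i2 ∧ θ i1 k ∧ y i2 k then (1:ℝ) else 0 := by
      apply Finset.sum_nonneg; intro k _
      apply Finset.sum_nonneg; intro i1 _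
      apply Finset.sum_nonneg; intro i2 _
      positivity
    linarith
  · refine ⟨fun _ => ((m:ℝ) + m' - 2 * m * m') / γ, fun θ y hθ hy => ?_⟩
    obtain ⟨hθr, hθc, -⟩ := (hinA θ).mp hθ
    obtain ⟨hyr, hyc, -⟩ := (hinA y).mp hy
    rw [hGAMA θ y, hGc θ y, hA θ y]
    -- notation
    set P : ℝ := ∑ i, ∑ k, if θ i k ∧ y i k then (1:ℝ) else 0 with hP
    set T : ℝ := ∑ i, ∑ k, if θ i k then (1:ℝ) else 0 with hT
    set U : ℝ := ∑ i, ∑ k, if y i k then (1:ℝ) else 0 with hU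
    set SR : ℝ := ∑ i, (∑ k, if θ i k then (1:ℝ) else 0) * (∑ k, if y i k then (1:ℝ) else 0)
      with hSR
    set SC : ℝ := ∑ k, (∑ i, if θ i k then (1:ℝ) else 0) * (∑ i, if y i k then (1:ℝ) else 0)
      with hSC
    -- row products
    have Frow : (∑ i, ∏ k, if ¬ θ i k ∧ ¬ y i k then (1:ℝ) else 0) = m - T - U + SR := by
      have : ∀ i ∈ Finset.univ, (∏ k, if ¬ θ i k ∧ ¬ y i k then (1:ℝ) else 0)
          = (1 - ∑ k, (if θ i k then (1:ℝ) else 0)) * (1 - ∑ k, (if y i k then (1:ℝ) else 0)) :=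
        fun i _ => prod_notnot _ _ (hθr i) (hyr i)
      rw [Finset.sum_congr rfl this]
      simp only [sub_mul, mul_sub, mul_one, one_mul]
      rw [hT, hU, hSR]
      simp [Finset.sum_add_distrib, Finset.sum_sub_distrib]
      ring
    have Fcol : (∑ k, ∏ i, if ¬ θ i k ∧ ¬ y i k then (1:ℝ) else 0) = m' - T - U + SC := by
      have : ∀ k ∈ Finset.univ, (∏ i, if ¬ θ i k ∧ ¬ y i k then (1:ℝ) else 0)
          = (1 - ∑ i, (if θ i k then (1:ℝ) else 0)) * (1 - ∑ i, (if y i k then (1:ℝ) else 0)) :=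
        fun k _ => prod_notnot _ _ (hθc k) (hyc k)
      rw [Finset.sum_congr rfl this]
      simp only [sub_mul, mul_sub, mul_one, one_mul]
      have hT' : T = ∑ k, ∑ i, if θ i k then (1:ℝ) else 0 := by rw [hT, Finset.sum_comm]
      have hU' : U = ∑ k, ∑ i, if y i k then (1:ℝ) else 0 := by rw [hU, Finset.sum_comm]
      rw [hT', hU', hSC]
      simp [Finset.sum_add_distrib, Finset.sum_sub_distrib]
      ring
    -- centroid
    have FGc : (∑ i, ∑ k,
        (γ * (if θ i k ∧ y i k then (1:ℝ) else 0) + (if ¬ θ i k ∧ ¬ y i k then (1:ℝ) else 0)))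
        = γ * P + ((m : ℝ) * m' - T - U + P) := by
      have key : ∀ (a b : Bool),
          γ * (if a ∧ b then (1:ℝ) else 0) + (if ¬ a ∧ ¬ b then (1:ℝ) else 0)
          = γ * (if a ∧ b then (1:ℝ) else 0)
            + (1 - (if a then (1:ℝ) else 0) - (if b then (1:ℝ) else 0)
               + (if a ∧ b then (1:ℝ) else 0)) := by
        intro a b; cases a <;> cases b <;> simp
      simp only [key, Finset.sum_add_distrib, Finset.sum_sub_distrib, ← Finset.mul_sum,
        Finset.sum_const, Finset.card_univ, Fintype.card_fin, nsmul_eq_mul, mul_one]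
      rfl
    -- A term
    have FArow : (∑ i, ∑ k1, ∑ k2, if k1 ≠ k2 ∧ θ i k1 ∧ y i k2 then (1:ℝ) else 0)
        = SR - P := by
      have : ∀ i ∈ Finset.univ, (∑ k1, ∑ k2, if k1 ≠ k2 ∧ θ i k1 ∧ y i k2 then (1:ℝ) else 0)
          = (∑ k, if θ i k then (1:ℝ) else 0) * (∑ k, if y i k then (1:ℝ) else 0)
            - (∑ k, if θ i k ∧ y i k then (1:ℝ) else 0) := by
        intro i _
        rw [sum_mul_sum_split (θ i) (y i)]
        ring
      rw [Finset.sum_congr rfl this, Finset.sum_sub_distrib, ← hSR, ← hP]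
    have FAcol : (∑ k, ∑ i1, ∑ i2, if i1 ≠ i2 ∧ θ i1 k ∧ y i2 k then (1:ℝ) else 0)
        = SC - P := by
      have : ∀ k ∈ Finset.univ, (∑ i1, ∑ i2, if i1 ≠ i2 ∧ θ i1 k ∧ y i2 k then (1:ℝ) else 0)
          = (∑ i, if θ i k then (1:ℝ) else 0) * (∑ i, if y i k then (1:ℝ) else 0)
            - (∑ i, if θ i k ∧ y i k then (1:ℝ) else 0) := by
        intro k _
        rw [sum_mul_sum_split (fun i => θ i k) (fun i => y i k)]
        ring
      rw [Finset.sum_congr rfl this, Finset.sum_sub_distrib, ← hSC]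
      have hP' : P = ∑ k, ∑ i, if θ i k ∧ y i k then (1:ℝ) else 0 := by
        rw [hP, Finset.sum_comm]
      rw [← hP']
    rw [Frow, Fcol, FGc, FArow, FAcol]
    field_simp
    ring
end
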